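/- Let A_1,...,A_n be events in a probability space, and for each i let Γ(i) ⊆ [n]\{i} be a set of indices. Suppose there is a constant c ≥ 1 and real numbers x_i ∈ [0, 1/c) such that (1) for every i and every S ⊆ [n]\(Γ(i) ∪ {i}), P(A_i | ⋀_{j∈S} A_j^c) ≤ c·P(A_i), and (2) P(A_i) ≤ x_i · ∏_{j∈Γ(i)} (1 − c·x_j). Then P(⋀_{i=1}^n A_i^c) ≥ ∏_{i=1}^n (1 − c·x_i). -/

import Mathlib

open MeasureTheory

/-- Generalized lopsided Lovász local lemma. -/
theorem generalized_lopsided_LLL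
    {Ω : Type*} [MeasurableSpace Ω] (μ : Measure Ω) [IsProbabilityMeasure μ]
    {n : ℕ} (A : Fin n → Set Ω) (hA : ∀ i, MeasurableSet (A i))
    (Γ : Fin n → Finset (Fin n)) (hΓ : ∀ i, i ∉ Γ i)
    (c : ℝ) (hc : 1 ≤ c) (x : Fin n → ℝ) (hx : ∀ i, x i ∈ Set.Ico (0 : ℝ) (1 / c))
    (hcond : ∀ i (S : Finset (Fin n)), i ∉ S → (∀ j ∈ S, j ∉ Γ i) →
      (μ (A i ∩ ⋂ j ∈ S, (A j)ᶜ)).toReal / (μ (⋂ j ∈ S, (A j)ᶜ)).toReal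
        ≤ c * (μ (A i)).toReal)
    (hbound : ∀ i, (μ (A i)).toReal ≤ x i * ∏ j ∈ Γ i, (1 - c * x j)) :
    (μ (⋂ i, (A i)ᶜ)).toReal ≥ ∏ i, (1 - c * x i) := by
  have hc0 : (0:ℝ) < c := lt_of_lt_of_le one_pos hc
  have hfac : ∀ j, 0 < 1 - c * x j := by
    intro j
    have h1 : x j < 1 / c := (hx j).2
    have h2 : c * x j < 1 := by
      have := (mul_lt_mul_iff_right₀ hc0).2 h1
      rwa [mul_one_div, div_self (ne_of_gt hc0)] at this
    linarith
  have hfac1 : ∀ j, 1 - c * x j ≤ 1 := by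
    intro j
    have hx0 := (hx j).1
    nlinarith
  set p : Finset (Fin n) → ℝ := fun S => (μ (⋂ j ∈ S, (A j)ᶜ)).toReal with hp
  set q : Fin n → Finset (Fin n) → ℝ := fun i S => (μ (A i ∩ ⋂ j ∈ S, (A j)ᶜ)).toReal with hq
  have hpnn : ∀ S, 0 ≤ p S := fun S => ENNReal.toReal_nonneg
  have hqnn : ∀ i S, 0 ≤ q i S := fun i S => ENNReal.toReal_nonneg
  -- splitting identity
  have hsplit : ∀ (i : Fin n) (S : Finset (Fin n)), p S = q i S + p (insert i S) := by
    intro i S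
    have h1 : (⋂ j ∈ insert i S, (A j)ᶜ) = (A i)ᶜ ∩ ⋂ j ∈ S, (A j)ᶜ :=
      Finset.set_biInter_insert i S (fun j => (A j)ᶜ)
    have h2 : μ ((⋂ j ∈ S, (A j)ᶜ) ∩ A i) + μ ((⋂ j ∈ S, (A j)ᶜ) \ A i)
        = μ (⋂ j ∈ S, (A j)ᶜ) := measure_inter_add_diff _ (hA i)
    have h3 : (⋂ j ∈ S, (A j)ᶜ) ∩ A i = A i ∩ ⋂ j ∈ S, (A j)ᶜ := Set.inter_comm _ _
    have h4 : (⋂ j ∈ S, (A j)ᶜ) \ A i = (A i)ᶜ ∩ ⋂ j ∈ S, (A j)ᶜ := by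
      rw [Set.diff_eq, Set.inter_comm]
    rw [h3, h4] at h2
    simp only [hp, hq, h1]
    rw [← h2, ENNReal.toReal_add (measure_ne_top μ _) (measure_ne_top μ _)]
  -- monotonicity of q in S
  have hqmono : ∀ i (S₂ S : Finset (Fin n)), S₂ ⊆ S → q i S ≤ q i S₂ := by
    intro i S₂ S hsub
    apply ENNReal.toReal_mono (measure_ne_top μ _)
    apply measure_mono
    intro y hy
    simp only [Set.mem_inter_iff, Set.mem_iInter] at hy ⊢
    exact ⟨hy.1, fun j hj => hy.2 j (hsub hj)⟩
  -- hcond rearranged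
  have hqle : ∀ i (S₂ : Finset (Fin n)), i ∉ S₂ → (∀ j ∈ S₂, j ∉ Γ i) →
      q i S₂ ≤ c * (μ (A i)).toReal * p S₂ := by
    intro i S₂ hi hj
    have h := hcond i S₂ hi hj
    rcases eq_or_lt_of_le (hpnn S₂) with h0 | hpos
    · have hμ0 : μ (⋂ j ∈ S₂, (A j)ᶜ) = 0 := by
        have := (ENNReal.toReal_eq_zero_iff _).mp h0.symm
        rcases this with h' | h'
        · exact h'
        · exact absurd h' (measure_ne_top μ _)
      have hq0 : q i S₂ = 0 := by
        simp only [hq]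
        have : μ (A i ∩ ⋂ j ∈ S₂, (A j)ᶜ) = 0 :=
          le_antisymm (hμ0 ▸ measure_mono Set.inter_subset_right) zero_le
        simp [this]
      rw [hq0, ← h0]
      simp [mul_nonneg, mul_nonneg (le_of_lt hc0) ENNReal.toReal_nonneg]
    · exact (div_le_iff₀ hpos).mp h
  -- the key lemma, by strong induction on the cardinality bound
  have key : ∀ N : ℕ, ∀ S : Finset (Fin n), S.card ≤ N → ∀ i, i ∉ S →
      q i S ≤ c * x i * p S := by
    intro N
    induction N using Nat.strong_induction_on with
    | _ N IH =>
      intro S hcard i hiS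
      classical
      set S₁ : Finset (Fin n) := S ∩ Γ i with hS₁def
      set S₂ : Finset (Fin n) := S \ Γ i with hS₂def
      have hS₂S : S₂ ⊆ S := Finset.sdiff_subset
      have hS₁Γ : S₁ ⊆ Γ i := Finset.inter_subset_right
      have hS₁S : S₁ ⊆ S := Finset.inter_subset_left
      have hunion : S₁ ∪ S₂ = S := by
        rw [Finset.union_comm]; exact Finset.sdiff_union_inter S (Γ i)
      -- claim: building up S₁ one element at a time
      have hQ : ∀ T : Finset (Fin n), T ⊆ S₁ →
          (∏ j ∈ T, (1 - c * x j)) * p S₂ ≤ p (T ∪ S₂) := by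
        intro T
        induction T using Finset.induction_on with
        | empty => intro _; simp
        | @insert a T ha IHT =>
          intro hsub
          have haS₁ : a ∈ S₁ := hsub (Finset.mem_insert_self a T)
          have haΓ : a ∈ Γ i := hS₁Γ haS₁
          have haS : a ∈ S := hS₁S haS₁
          have haS₂ : a ∉ S₂ := by
            simp [hS₂def, haΓ]
          have haTS₂ : a ∉ T ∪ S₂ := by
            simp [ha, haS₂]
          have hTsub : T ⊆ S₁ := fun b hb => hsub (Finset.mem_insert_of_mem hb)
          have hTS₂sub : T ∪ S₂ ⊆ S.erase a := by
            intro b hb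
            rcases Finset.mem_union.mp hb with hb' | hb'
            · exact Finset.mem_erase.mpr ⟨by rintro rfl; exact ha hb', hS₁S (hTsub hb')⟩
            · exact Finset.mem_erase.mpr ⟨by rintro rfl; exact haS₂ hb', hS₂S hb'⟩
          have hcard' : (T ∪ S₂).card < N := by
            have h1 : (T ∪ S₂).card ≤ (S.erase a).card := Finset.card_le_card hTS₂sub
            have h2 : (S.erase a).card < S.card := Finset.card_erase_lt_of_mem haS
            omega
          have hkey := IH (T ∪ S₂).card hcard' (T ∪ S₂) le_rfl a haTS₂
          have hsplit' := hsplit a (T ∪ S₂)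
          have hins : insert a T ∪ S₂ = insert a (T ∪ S₂) := Finset.insert_union a T S₂
          rw [hins, Finset.prod_insert ha]
          have hfa := hfac a
          have hstep : (1 - c * x a) * p (T ∪ S₂) ≤ p (insert a (T ∪ S₂)) := by
            nlinarith [hpnn (T ∪ S₂)]
          calc (1 - c * x a) * (∏ j ∈ T, (1 - c * x j)) * p S₂
              = (1 - c * x a) * ((∏ j ∈ T, (1 - c * x j)) * p S₂) := by
                rw [mul_assoc]
            _ ≤ (1 - c * x a) * p (T ∪ S₂) :=
                mul_le_mul_of_nonneg_left (IHT hTsub) (le_of_lt hfa)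
            _ ≤ p (insert a (T ∪ S₂)) := hstep
      have hQS : (∏ j ∈ S₁, (1 - c * x j)) * p S₂ ≤ p S := by
        have := hQ S₁ subset_rfl
        rwa [hunion] at this
      -- product over Γ i bounded by product over S₁
      have hprodle : ∏ j ∈ Γ i, (1 - c * x j) ≤ ∏ j ∈ S₁, (1 - c * x j) := by
        rw [← Finset.prod_sdiff hS₁Γ]
        have h1 : ∏ j ∈ Γ i \ S₁, (1 - c * x j) ≤ 1 :=
          Finset.prod_le_one (fun j _ => le_of_lt (hfac j)) (fun j _ => hfac1 j)
        have h2 : (0:ℝ) ≤ ∏ j ∈ S₁, (1 - c * x j) :=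
          Finset.prod_nonneg (fun j _ => le_of_lt (hfac j))
        nlinarith
      have hi₂ : i ∉ S₂ := fun h => hiS (hS₂S h)
      have hj₂ : ∀ j ∈ S₂, j ∉ Γ i := by
        intro j hj
        exact (Finset.mem_sdiff.mp hj).2
      have hxinn : 0 ≤ x i := (hx i).1
      have hprodnn : (0:ℝ) ≤ ∏ j ∈ S₁, (1 - c * x j) :=
        Finset.prod_nonneg (fun j _ => le_of_lt (hfac j))
      calc q i S ≤ q i S₂ := hqmono i S₂ S hS₂S
        _ ≤ c * (μ (A i)).toReal * p S₂ := hqle i S₂ hi₂ hj₂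
        _ ≤ c * (x i * ∏ j ∈ Γ i, (1 - c * x j)) * p S₂ := by
            apply mul_le_mul_of_nonneg_right _ (hpnn S₂)
            exact mul_le_mul_of_nonneg_left (hbound i) (le_of_lt hc0)
        _ ≤ c * (x i * ∏ j ∈ S₁, (1 - c * x j)) * p S₂ := by
            apply mul_le_mul_of_nonneg_right _ (hpnn S₂)
            apply mul_le_mul_of_nonneg_left _ (le_of_lt hc0)
            exact mul_le_mul_of_nonneg_left hprodle hxinn
        _ = c * x i * ((∏ j ∈ S₁, (1 - c * x j)) * p S₂) := by ring
        _ ≤ c * x i * p S := by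
            apply mul_le_mul_of_nonneg_left hQS
            exact mul_nonneg (le_of_lt hc0) hxinn
  -- final induction
  have final : ∀ S : Finset (Fin n), ∏ j ∈ S, (1 - c * x j) ≤ p S := by
    intro S
    induction S using Finset.induction_on with
    | empty => simp [hp]
    | @insert a S ha IHS =>
      have hk := key S.card S le_rfl a ha
      have hs := hsplit a S
      rw [Finset.prod_insert ha]
      have hfa := hfac a
      have hxa := (hx a).1
      nlinarith [hpnn S, Finset.prod_nonneg (fun j (_ : j ∈ S) => le_of_lt (hfac j))]
  have huniv := final Finset.univ
  have heq : p Finset.univ = (μ (⋂ i, (A i)ᶜ)).toReal := by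
    simp [hp]
  rw [heq] at huniv
  exact huniv
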